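/- If n ≥ 4 and S ⊆ {3,4,...,n-1}, then the set of cycle lengths of G_n(S) is exactly {n} ∪ S ∪ {n+2-a : a ∈ S} ∪ {b-a+2 : a,b ∈ S, b > a}; that is, G_n(S) has a cycle of length k if and only if k lies in this union. -/

import Mathlib

/-- The cycle `C_n` on vertex set `Fin n`, where label `i` represents the integer `i + 1`;
edges join consecutive integers mod `n` (i.e. `{i, i+1}` for `1 ≤ i ≤ n - 1` and `{n, 1}`). -/
def cycG (n : ℕ) : SimpleGraph (Fin n) :=
  SimpleGraph.fromRel (fun i j => (i.val + 1) % n = j.val)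

/-- The graph `G_n(S)`: the cycle `C_n` together with a chord `{1, a}` for each `a ∈ S`
(vertex label `i` represents the integer `i + 1`, so the integer vertex `1` is label `0`
and the integer vertex `a` is label `a - 1`). -/
def GnS (n : ℕ) (S : Finset ℕ) : SimpleGraph (Fin n) :=
  SimpleGraph.fromRel (fun i j => (i.val + 1) % n = j.val ∨ (i.val = 0 ∧ j.val + 1 ∈ S))

namespace GnSAux

open SimpleGraph Walk

variable {n : ℕ} {S : Finset ℕ}

lemma gns_adj_iff {u v : Fin n} :
    (GnS n S).Adj u v ↔ u ≠ v ∧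
      (((u.val + 1) % n = v.val ∨ (u.val = 0 ∧ v.val + 1 ∈ S)) ∨
       ((v.val + 1) % n = u.val ∨ (v.val = 0 ∧ u.val + 1 ∈ S))) :=
  SimpleGraph.fromRel_adj _ _ _

lemma mod_succ {i j : Fin n} (h : (i.val + 1) % n = j.val) :
    i.val + 1 = j.val ∨ (i.val = n - 1 ∧ j.val = 0) := by
  have hi := i.isLt
  have hj := j.isLt
  rcases Nat.lt_or_ge (i.val + 1) n with h' | h'
  · left; rwa [Nat.mod_eq_of_lt h'] at h
  · have he : i.val + 1 = n := by omega
    rw [he, Nat.mod_self] at h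
    right; omega

lemma step_of_adj {u v : Fin n} (h : (GnS n S).Adj u v)
    (hu : u.val ≠ 0) (hv : v.val ≠ 0) : u.val + 1 = v.val ∨ v.val + 1 = u.val := by
  rcases gns_adj_iff.mp h with ⟨-, (h1 | h1) | (h1 | h1)⟩
  · rcases mod_succ h1 with h2 | h2
    · exact Or.inl h2
    · exact absurd h2.2 hv
  · exact absurd h1.1 hu
  · rcases mod_succ h1 with h2 | h2
    · exact Or.inr h2
    · exact absurd h2.2 hu
  · exact absurd h1.1 hv

lemma adj_of_zero (hn : 4 ≤ n) {u v : Fin n} (hu : u.val = 0) (h : (GnS n S).Adj u v) :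
    v.val = 1 ∨ v.val = n - 1 ∨ v.val + 1 ∈ S := by
  rcases gns_adj_iff.mp h with ⟨hne, (h1 | h1) | (h1 | h1)⟩
  · rcases mod_succ h1 with h2 | h2
    · left; omega
    · exfalso; apply hne; apply Fin.ext; omega
  · right; right; exact h1.2
  · rcases mod_succ h1 with h2 | h2
    · exfalso; omega
    · right; left; exact h2.1
  · exfalso; apply hne; apply Fin.ext; omega

lemma adj_consec {u v : Fin n} (h : u.val + 1 = v.val) : (GnS n S).Adj u v := by
  rw [gns_adj_iff]
  refine ⟨fun e => by subst e; omega, Or.inl (Or.inl ?_)⟩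
  rw [Nat.mod_eq_of_lt (h ▸ v.isLt)]
  exact h

lemma adj_wrap (hn : 4 ≤ n) : (GnS n S).Adj ⟨n - 1, by omega⟩ ⟨0, by omega⟩ := by
  rw [gns_adj_iff]
  refine ⟨?_, Or.inl (Or.inl ?_)⟩
  · intro e
    have := congrArg Fin.val e
    simp only at this
    omega
  · show (n - 1 + 1) % n = 0
    rw [Nat.sub_add_cancel (by omega), Nat.mod_self]

lemma adj_chord (hn : 4 ≤ n) (hS : S ⊆ Finset.Icc 3 (n - 1)) {a : ℕ} (ha : a ∈ S) :
    (GnS n S).Adj ⟨0, by omega⟩ ⟨a - 1, by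
      have := Finset.mem_Icc.mp (hS ha); omega⟩ := by
  have hb := Finset.mem_Icc.mp (hS ha)
  rw [gns_adj_iff]
  refine ⟨?_, Or.inl (Or.inr ⟨rfl, ?_⟩)⟩
  · intro e
    have := congrArg Fin.val e
    simp only at this
    omega
  · show a - 1 + 1 ∈ S
    rwa [Nat.sub_add_cancel (by omega)]

lemma walk_gt {c : ℕ} {a b : Fin n} (q : (GnS n S).Walk a b)
    (h0 : ∀ w ∈ q.support, w.val ≠ 0) (hc : ∀ w ∈ q.support, w.val ≠ c)
    (ha : c < a.val) : c < b.val := by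
  induction q with
  | nil => exact ha
  | @cons u v w h q ih =>
    have hu0 : u.val ≠ 0 := h0 _ (by simp)
    have hv0 : v.val ≠ 0 := h0 _ (by simp)
    have step := step_of_adj h hu0 hv0
    have hvc : v.val ≠ c := hc _ (by simp)
    exact ih (fun x hx => h0 x (by simp [hx])) (fun x hx => hc x (by simp [hx])) (by omega)

lemma walk_lt {c : ℕ} {a b : Fin n} (q : (GnS n S).Walk a b)
    (h0 : ∀ w ∈ q.support, w.val ≠ 0) (hc : ∀ w ∈ q.support, w.val ≠ c)
    (ha : a.val < c) : b.val < c := by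
  induction q with
  | nil => exact ha
  | @cons u v w h q ih =>
    have hu0 : u.val ≠ 0 := h0 _ (by simp)
    have hv0 : v.val ≠ 0 := h0 _ (by simp)
    have step := step_of_adj h hu0 hv0
    have hvc : v.val ≠ c := hc _ (by simp)
    exact ih (fun x hx => h0 x (by simp [hx])) (fun x hx => hc x (by simp [hx])) (by omega)

lemma path_length {a b : Fin n} (q : (GnS n S).Walk a b) (hq : q.IsPath)
    (h0 : ∀ w ∈ q.support, w.val ≠ 0) :
    q.length + a.val = b.val ∨ q.length + b.val = a.val := by
  induction q with
  | nil => simp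
  | @cons u v w h q ih =>
    obtain ⟨hq', hu⟩ := (Walk.cons_isPath_iff _ _).mp hq
    have h0' : ∀ x ∈ q.support, x.val ≠ 0 := fun x hx => h0 x (by simp [hx])
    have huc : ∀ x ∈ q.support, x.val ≠ u.val := by
      intro x hx e
      exact hu (by rwa [(Fin.ext e : x = u)] at hx)
    have hu0 : u.val ≠ 0 := h0 _ (by simp)
    have hv0 : v.val ≠ 0 := h0 _ (by simp)
    have step := step_of_adj h hu0 hv0
    have IH := ih hq' h0'
    simp only [Walk.length_cons]
    rcases step with s1 | s2
    · have hb : u.val < w.val := walk_gt q h0' huc (by omega)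
      omega
    · have hb : w.val < u.val := walk_lt q h0' huc (by omega)
      omega

/-- Classification of lengths of cycles based at the vertex labelled `0`. -/
lemma forward_zero (hn : 4 ≤ n) (hS : S ⊆ Finset.Icc 3 (n - 1)) {z : Fin n} (hzv : z.val = 0)
    {c : (GnS n S).Walk z z} (hcc : c.IsCycle) :
    c.length = n ∨ c.length ∈ S ∨ (∃ a ∈ S, c.length = n + 2 - a) ∨
      (∃ a ∈ S, ∃ b ∈ S, a < b ∧ c.length = b - a + 2) := by
  cases c with
  | nil => exact absurd rfl ((Walk.isCycle_def _).mp hcc).2.1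
  | @cons _ v _ e q =>
    have hq : q.IsPath := (Walk.isPath_def _).mpr (by
      have := ((Walk.isCycle_def _).mp hcc).2.2
      simpa using this)
    have hqr : q.reverse.IsPath := hq.reverse
    have hql : q.reverse.length = q.length := Walk.length_reverse _
    have h3 := hcc.three_le_length
    simp only [Walk.length_cons] at h3 ⊢
    revert hqr hql
    generalize q.reverse = q'
    intro hqr hql
    cases q' with
    | nil => exact absurd rfl e.ne
    | @cons _ w _ e' r =>
      obtain ⟨hr, hzr⟩ := (Walk.cons_isPath_iff _ _).mp hqr
      have h0r : ∀ x ∈ r.support, x.val ≠ 0 := by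
        intro x hx e0
        exact hzr (by rwa [(Fin.ext (e0.trans hzv.symm) : x = z)] at hx)
      have hL := path_length r hr h0r
      simp only [Walk.length_cons] at hql
      have hv := adj_of_zero hn hzv e
      have hw := adj_of_zero hn hzv e'
      rcases hv with hv | hv | hv <;> rcases hw with hw | hw | hw
      · omega
      · left; omega
      · have hb := Finset.mem_Icc.mp (hS hw)
        right; left
        have : q.length + 1 = w.val + 1 := by omega
        rw [this]; exact hw
      · left; omega
      · omega
      · have hb := Finset.mem_Icc.mp (hS hw)
        right; right; left
        exact ⟨w.val + 1, hw, by omega⟩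
      · have hb := Finset.mem_Icc.mp (hS hv)
        right; left
        have : q.length + 1 = v.val + 1 := by omega
        rw [this]; exact hv
      · have hb := Finset.mem_Icc.mp (hS hv)
        right; right; left
        exact ⟨v.val + 1, hv, by omega⟩
      · have hbv := Finset.mem_Icc.mp (hS hv)
        have hbw := Finset.mem_Icc.mp (hS hw)
        right; right; right
        rcases Nat.lt_or_ge v.val w.val with hlt | hge
        · exact ⟨v.val + 1, hv, w.val + 1, hw, by omega, by omega⟩
        · exact ⟨w.val + 1, hw, v.val + 1, hv, by omega, by omega⟩

lemma forward (hn : 4 ≤ n) (hS : S ⊆ Finset.Icc 3 (n - 1)) {u : Fin n}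
    {p : (GnS n S).Walk u u} (hc : p.IsCycle) :
    p.length = n ∨ p.length ∈ S ∨ (∃ a ∈ S, p.length = n + 2 - a) ∨
      (∃ a ∈ S, ∃ b ∈ S, a < b ∧ p.length = b - a + 2) := by
  have hz : (⟨0, by omega⟩ : Fin n) ∈ p.support := by
    by_contra hz
    have h0 : ∀ w ∈ p.support, w.val ≠ 0 := by
      intro w hw e
      exact hz (by rwa [(Fin.ext e : w = ⟨0, by omega⟩)] at hw)
    cases p with
    | nil => exact ((Walk.isCycle_def _).mp hc).2.1 rfl
    | @cons _ v _ e q =>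
      have hq : q.IsPath := (Walk.isPath_def _).mpr (by
        have := ((Walk.isCycle_def _).mp hc).2.2
        simpa using this)
      have hL := path_length q hq (fun w hw => h0 w (by simp [hw]))
      have hadj := step_of_adj e (h0 _ (by simp)) (h0 _ (by simp))
      have h3 := hc.three_le_length
      simp only [Walk.length_cons] at h3
      omega
  have hcc : (p.rotate _ hz).IsCycle := hc.rotate hz
  have hlen : (p.rotate _ hz).length = p.length := by
    have := (p.rotate_edges _ hz).perm.length_eq
    rwa [Walk.length_edges, Walk.length_edges] at this
  have := forward_zero hn hS rfl hcc
  rwa [hlen] at this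

/-- A straight segment walk going up through consecutive labels. -/
def seg (n : ℕ) (S : Finset ℕ) : (m : ℕ) → (x : Fin n) → (h : x.val + m < n) →
    (GnS n S).Walk x ⟨x.val + m, h⟩
  | 0, x, h => Walk.nil.copy rfl (Fin.ext (by simp))
  | m + 1, x, h =>
    Walk.cons (adj_consec (u := x) (v := ⟨x.val + 1, by omega⟩) rfl)
      ((seg n S m ⟨x.val + 1, by omega⟩ (by exact (show x.val + 1 + m < n by omega))).copy rfl
        (Fin.ext (by simp; omega)))

lemma seg_length : ∀ (m : ℕ) (x : Fin n) (h : x.val + m < n), (seg n S m x h).length = m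
  | 0, x, h => by simp [seg]
  | m + 1, x, h => by simp [seg, seg_length m]

lemma seg_support : ∀ (m : ℕ) (x : Fin n) (h : x.val + m < n),
    ∀ w ∈ (seg n S m x h).support, x.val ≤ w.val ∧ w.val ≤ x.val + m
  | 0, x, h => by
    intro w hw
    simp [seg] at hw
    subst hw; omega
  | m + 1, x, h => by
    intro w hw
    simp only [seg, Walk.support_cons, Walk.support_copy, List.mem_cons] at hw
    rcases hw with rfl | hw
    · omega
    · have h1 : x.val + 1 ≤ w.val ∧ w.val ≤ x.val + 1 + m :=
        seg_support m ⟨x.val + 1, by omega⟩ (by exact (show x.val + 1 + m < n by omega)) w hw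
      omega

lemma seg_isPath : ∀ (m : ℕ) (x : Fin n) (h : x.val + m < n), (seg n S m x h).IsPath
  | 0, x, h => by
    simp only [seg]
    rw [Walk.isPath_copy]
    exact Walk.IsPath.nil
  | m + 1, x, h => by
    simp only [seg]
    rw [Walk.cons_isPath_iff]
    constructor
    · rw [Walk.isPath_copy]
      exact seg_isPath m _ _
    · intro hx
      rw [Walk.support_copy] at hx
      have h1 : x.val + 1 ≤ x.val ∧ x.val ≤ x.val + 1 + m :=
        seg_support m ⟨x.val + 1, by omega⟩ (by exact (show x.val + 1 + m < n by omega)) x hx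
      omega

lemma build_cycle (hn : 4 ≤ n) (x y : ℕ) (hx : 1 ≤ x) (hxy : x < y) (hy : y ≤ n - 1)
    (ex : (GnS n S).Adj ⟨0, by omega⟩ ⟨x, by omega⟩)
    (ey : (GnS n S).Adj ⟨y, by omega⟩ ⟨0, by omega⟩) :
    ∃ (u : Fin n) (p : (GnS n S).Walk u u), p.IsCycle ∧ p.length = y - x + 2 := by
  have hseg : (⟨x, by omega⟩ : Fin n).val + (y - x) < n := by simp; omega
  let X : Fin n := ⟨x, by omega⟩
  let Y : Fin n := ⟨y, by omega⟩
  let z : Fin n := ⟨0, by omega⟩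
  let s : (GnS n S).Walk X Y :=
    (seg n S (y - x) X hseg).copy rfl (Fin.ext (by show x + (y - x) = y; omega))
  have hs_len : s.length = y - x := by
    simp only [s, Walk.length_copy]
    exact seg_length _ _ _
  have hs_path : s.IsPath := by
    simp only [s]
    rw [Walk.isPath_copy]
    exact seg_isPath _ _ _
  have hs_sup : ∀ v ∈ s.support, x ≤ v.val ∧ v.val ≤ y := by
    intro v hv
    simp only [s, Walk.support_copy] at hv
    have h1 : x ≤ v.val ∧ v.val ≤ x + (y - x) := seg_support _ _ _ v hv
    omega
  have hzs : z ∉ s.support := by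
    intro hmem
    have h1 : x ≤ (0 : ℕ) ∧ (0 : ℕ) ≤ y := hs_sup z hmem
    omega
  refine ⟨z, Walk.cons ex (s.append (Walk.cons ey Walk.nil)), ?_, ?_⟩
  · rw [Walk.isCycle_def]
    refine ⟨?_, by simp, ?_⟩
    · -- trail: edges nodup
      rw [Walk.isTrail_def]
      simp only [Walk.edges_cons, Walk.edges_append, Walk.edges_nil, List.append_nil]
      have hse : s.edges.Nodup :=
        Walk.edges_nodup_of_support_nodup ((Walk.isPath_def _).mp hs_path)
      have h1 : s(z, X) ∉ s.edges := fun hmem => hzs (s.fst_mem_support_of_mem_edges hmem)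
      have h2 : s(Y, z) ∉ s.edges := by
        intro hmem
        rw [Sym2.eq_swap] at hmem
        exact hzs (s.fst_mem_support_of_mem_edges hmem)
      have h3 : s(z, X) ≠ s(Y, z) := by
        intro he
        rw [Sym2.eq_iff] at he
        rcases he with ⟨e1, e2⟩ | ⟨e1, e2⟩
        · have h4 : (0 : ℕ) = y := congrArg Fin.val e1
          omega
        · have h4 : x = y := congrArg Fin.val e2
          omega
      rw [List.nodup_cons, List.mem_append]
      constructor
      · rintro (h | h)
        · exact h1 h
        · simp only [List.mem_singleton] at h
          exact h3 h
      · rw [List.nodup_append]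
        exact ⟨hse, List.nodup_singleton _,
            fun a ha b hb e => h2 (by rw [List.mem_singleton] at hb; rw [← hb, ← e]; exact ha)⟩
    · -- support tail nodup
      simp only [Walk.support_cons, List.tail_cons, Walk.support_append,
        Walk.support_cons, Walk.support_nil, List.tail_cons]
      rw [List.nodup_append]
      exact ⟨(Walk.isPath_def _).mp hs_path, List.nodup_singleton _,
        fun a ha b hb e => hzs (by rw [List.mem_singleton] at hb; subst hb; subst e; exact ha)⟩
  · simp only [Walk.length_cons, Walk.length_append, Walk.length_nil, hs_len]

end GnSAux

/-- If `n ≥ 4` and `S ⊆ {3, ..., n-1}`, then `G_n(S)` has a cycle of length `k` if and only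
if `k ∈ {n} ∪ S ∪ {n + 2 - a : a ∈ S} ∪ {b - a + 2 : a, b ∈ S, b > a}`. -/
theorem stmt7 (n : ℕ) (hn : 4 ≤ n) (S : Finset ℕ) (hS : S ⊆ Finset.Icc 3 (n - 1)) (k : ℕ) :
    (∃ (u : Fin n) (p : (GnS n S).Walk u u), p.IsCycle ∧ p.length = k) ↔
      (k = n ∨ k ∈ S ∨ (∃ a ∈ S, k = n + 2 - a) ∨
        (∃ a ∈ S, ∃ b ∈ S, a < b ∧ k = b - a + 2)) := by
  constructor
  · rintro ⟨u, p, hc, rfl⟩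
    exact GnSAux.forward hn hS hc
  · rintro (rfl | hk | ⟨a, ha, rfl⟩ | ⟨a, ha, b, hb, hab, rfl⟩)
    · -- k = n : use x = 1, y = n-1
      obtain ⟨u, p, h1, h2⟩ := GnSAux.build_cycle hn 1 (k - 1)
        le_rfl (by omega) le_rfl
        (GnSAux.adj_consec rfl) (GnSAux.adj_wrap hn)
      exact ⟨u, p, h1, by omega⟩
    · -- k ∈ S : x = 1, y = k-1
      have hb := Finset.mem_Icc.mp (hS hk)
      obtain ⟨u, p, h1, h2⟩ := GnSAux.build_cycle hn 1 (k - 1)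
        le_rfl (by omega) (by omega)
        (GnSAux.adj_consec rfl) ((GnSAux.adj_chord hn hS hk).symm)
      exact ⟨u, p, h1, by omega⟩
    · -- k = n + 2 - a : x = a-1, y = n-1
      have hb := Finset.mem_Icc.mp (hS ha)
      obtain ⟨u, p, h1, h2⟩ := GnSAux.build_cycle hn (a - 1) (n - 1)
        (by omega) (by omega) le_rfl
        (GnSAux.adj_chord hn hS ha) (GnSAux.adj_wrap hn)
      exact ⟨u, p, h1, by omega⟩
    · -- k = b - a + 2 : x = a-1, y = b-1
      have hba := Finset.mem_Icc.mp (hS ha)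
      have hbb := Finset.mem_Icc.mp (hS hb)
      obtain ⟨u, p, h1, h2⟩ := GnSAux.build_cycle hn (a - 1) (b - 1)
        (by omega) (by omega) (by omega)
        (GnSAux.adj_chord hn hS ha) ((GnSAux.adj_chord hn hS hb).symm)
      exact ⟨u, p, h1, by omega⟩
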